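/- Let A₁, …, A_m be pairwise commuting real d×d matrices, let ℓ ∈ ℝ^d, and define φ : ℝ^m → ℝ^d by φ(t) = (exp(−Σ_{k=1}^m t_k A_k))ᵀ ℓ. Let Ω ⊂ ℝ^m be measurable with finite positive Lebesgue measure, let Λ ⊂ ℝ^d and Γ ⊂ ℝ^m be countable, and suppose: (a) the restriction of φ to Ω is essentially injective with respect to Lebesgue measure m_Ω on Ω; (b) the pushforward φ_*(m_Ω) is a spectral measure with spectrum Λ; (c) the translates { Ω + γ : γ ∈ Γ } tile ℝ^m. Then the family { s ↦ e^{2πi φ(s−γ)·λ} 1_Ω(s−γ) : λ ∈ Λ, γ ∈ Γ } is an orthogonal basis for L²(ℝ^m). -/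

import Mathlib

open MeasureTheory Filter Set
open scoped Real ENNReal Topology

noncomputable section

/-- `e2pi t = e^{2π i t}`. -/
def e2pi (t : ℝ) : ℂ := Complex.exp (2 * Real.pi * Complex.I * t)

/-- The Euclidean dot product on `Fin d → ℝ`. -/
def dotp {d : ℕ} (a b : Fin d → ℝ) : ℝ := ∑ i, a i * b i

/-- `φ` is `μ`-essentially injective. -/
def EssInj {α β : Type*} [MeasurableSpace α] [MeasurableSpace β]
    (μ : Measure α) (φ : α → β) : Prop :=
  ∀ f : α → ℂ, MemLp f 2 μ →
    ∃ h : β → ℂ, MemLp h 2 (Measure.map φ μ) ∧ f =ᵐ[μ] fun x => h (φ x)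

/-- The family `E(Λ, φ)` is complete in `L²(μ)`. -/
def CompleteExp {α : Type*} [MeasurableSpace α] {d : ℕ}
    (μ : Measure α) (Λ : Set (Fin d → ℝ)) (φ : α → Fin d → ℝ) : Prop :=
  ∀ g : α → ℂ, MemLp g 2 μ →
    (∀ lam ∈ Λ, ∫ x, g x * (starRingEnd ℂ) (e2pi (dotp lam (φ x))) ∂μ = 0) →
    g =ᵐ[μ] 0

/-- The family `E(Λ, φ)` is an orthogonal basis of `L²(μ)`. -/
def OrthBasisExp {α : Type*} [MeasurableSpace α] {d : ℕ}
    (μ : Measure α) (Λ : Set (Fin d → ℝ)) (φ : α → Fin d → ℝ) : Prop :=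
  (∀ lam ∈ Λ, ∀ lam' ∈ Λ, lam ≠ lam' →
      ∫ x, e2pi (dotp lam (φ x)) * (starRingEnd ℂ) (e2pi (dotp lam' (φ x))) ∂μ = 0) ∧
  (∀ lam ∈ Λ, (∫ x, ‖e2pi (dotp lam (φ x))‖ ^ 2 ∂μ) ≠ 0) ∧
  CompleteExp μ Λ φ

/-- The phase function `φ(t) = (exp(−Σ t_k A_k))ᵀ ℓ`. -/
def liePhase {d m : ℕ} (A : Fin m → Matrix (Fin d) (Fin d) ℝ) (ℓ : Fin d → ℝ)
    (t : Fin m → ℝ) : Fin d → ℝ :=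
  (NormedSpace.exp (-(∑ k, t k • A k))).transpose.mulVec ℓ

/-- The generalized Gabor-type system `s ↦ e^{2π i φ(s−γ)·λ} 1_Ω(s−γ)`. -/
def genSys {d m : ℕ} (Ω : Set (Fin m → ℝ)) (φ : (Fin m → ℝ) → Fin d → ℝ)
    (lam : Fin d → ℝ) (γ : Fin m → ℝ) (s : Fin m → ℝ) : ℂ :=
  e2pi (dotp (φ (s - γ)) lam) * Set.indicator Ω (fun _ => (1 : ℂ)) (s - γ)

set_option maxHeartbeats 1000000

lemma e2pi_abs (t : ℝ) : ‖e2pi t‖ = 1 := by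
  simp [e2pi, Complex.norm_exp]

lemma e2pi_norm (t : ℝ) : ‖e2pi t‖ = 1 := by
  simp [e2pi_abs]

lemma e2pi_continuous : Continuous e2pi := by unfold e2pi; fun_prop

lemma dotp_comm {d : ℕ} (a b : Fin d → ℝ) : dotp a b = dotp b a :=
  Finset.sum_congr rfl fun i _ => mul_comm _ _

lemma dotp_continuous {d : ℕ} (a : Fin d → ℝ) : Continuous fun y => dotp a y :=
  continuous_finset_sum _ fun i _ => continuous_const.mul (continuous_apply i)

lemma expMat_continuous (d : ℕ) :
    Continuous (NormedSpace.exp : Matrix (Fin d) (Fin d) ℝ → Matrix (Fin d) (Fin d) ℝ) := by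
  letI : SeminormedRing (Matrix (Fin d) (Fin d) ℝ) := Matrix.linftyOpSemiNormedRing
  letI : NormedRing (Matrix (Fin d) (Fin d) ℝ) := Matrix.linftyOpNormedRing
  letI : NormedAlgebra ℝ (Matrix (Fin d) (Fin d) ℝ) := Matrix.linftyOpNormedAlgebra
  letI : NormedAlgebra ℚ (Matrix (Fin d) (Fin d) ℝ) := NormedAlgebra.restrictScalars ℚ ℝ _
  exact NormedSpace.exp_continuous

lemma liePhase_continuous {d m : ℕ} (A : Fin m → Matrix (Fin d) (Fin d) ℝ) (ℓ : Fin d → ℝ) :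
    Continuous (liePhase A ℓ) := by
  have hexp := expMat_continuous d
  have hM : Continuous fun t : Fin m → ℝ => -(∑ k, t k • A k) :=
    (continuous_finset_sum _ fun k _ => (continuous_apply k).smul continuous_const).neg
  refine continuous_pi fun i => ?_
  have he : (fun t => liePhase A ℓ t i)
      = fun t => ∑ j, (NormedSpace.exp (-(∑ k, t k • A k))) j i * ℓ j := by
    funext t
    simp [liePhase, Matrix.mulVec, dotProduct, Matrix.transpose_apply]
  rw [he]
  exact continuous_finset_sum _ fun j _ =>
    (((continuous_apply i).comp (continuous_apply j)).comp (hexp.comp hM)).mul continuous_const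

/-- Discretization of a unitary representation: if `φ(t) = (exp(−Σ t_k A_k))ᵀ ℓ`
(with `A₁,…,A_m` pairwise commuting), `φ` is essentially injective on `Ω`, the pushforward
`φ⋆(m_Ω)` is a spectral measure with spectrum `Λ`, and the translates `Ω + γ`, `γ ∈ Γ`, tile
`ℝ^m`, then `{ s ↦ e^{2π i φ(s−γ)·λ} 1_Ω(s−γ) : λ ∈ Λ, γ ∈ Γ }` is an orthogonal basis of
`L²(ℝ^m)`. -/
theorem statement18 {d m : ℕ} (A : Fin m → Matrix (Fin d) (Fin d) ℝ)
    (hcomm : ∀ i j, A i * A j = A j * A i) (ℓ : Fin d → ℝ)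
    (φ : (Fin m → ℝ) → Fin d → ℝ) (hφ : φ = liePhase A ℓ)
    (Ω : Set (Fin m → ℝ)) (hΩm : MeasurableSet Ω)
    (hΩpos : 0 < volume Ω) (hΩfin : volume Ω < ⊤)
    (Λ : Set (Fin d → ℝ)) (hΛ : Λ.Countable)
    (Γ : Set (Fin m → ℝ)) (hΓ : Γ.Countable)
    (ha : EssInj (volume.restrict Ω) φ)
    (hb : OrthBasisExp (Measure.map φ (volume.restrict Ω)) Λ id)
    (hc₁ : ∀ γ ∈ Γ, ∀ γ' ∈ Γ, γ ≠ γ' →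
      volume (((fun x => x + γ) '' Ω) ∩ ((fun x => x + γ') '' Ω)) = 0)
    (hc₂ : volume (Set.univ \ ⋃ γ ∈ Γ, (fun x => x + γ) '' Ω) = 0) :
    (∀ lam ∈ Λ, ∀ γ ∈ Γ, ∀ lam' ∈ Λ, ∀ γ' ∈ Γ, (lam, γ) ≠ (lam', γ') →
        ∫ s, genSys Ω φ lam γ s * (starRingEnd ℂ) (genSys Ω φ lam' γ' s) = 0) ∧
    (∀ lam ∈ Λ, ∀ γ ∈ Γ, (∫ s, ‖genSys Ω φ lam γ s‖ ^ 2) ≠ 0) ∧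
    (∀ g : (Fin m → ℝ) → ℂ, MemLp g 2 volume →
      (∀ lam ∈ Λ, ∀ γ ∈ Γ, ∫ s, g s * (starRingEnd ℂ) (genSys Ω φ lam γ s) = 0) →
      g =ᵐ[volume] 0) := by
  have hφc : Continuous φ := hφ ▸ liePhase_continuous A ℓ
  have hφm : AEMeasurable φ (volume.restrict Ω) := hφc.measurable.aemeasurable
  have hmem : ∀ (γ s : Fin m → ℝ), s ∈ (fun x => x + γ) '' Ω ↔ s - γ ∈ Ω := by
    intro γ s
    constructor
    · rintro ⟨x, hx, rfl⟩; simpa using hx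
    · intro h; exact ⟨s - γ, h, sub_add_cancel s γ⟩
  refine ⟨?_, ?_, ?_⟩
  · -- orthogonality
    intro lam hlam γ hγ lam' hlam' γ' hγ' hne
    by_cases hγγ : γ = γ'
    · subst hγγ
      have hlamne : lam ≠ lam' := fun h => hne (by rw [h])
      have key : (fun s => genSys Ω φ lam γ s * (starRingEnd ℂ) (genSys Ω φ lam' γ s))
          = fun s => (Set.indicator Ω
              (fun x => e2pi (dotp lam (φ x)) * (starRingEnd ℂ) (e2pi (dotp lam' (φ x))))) (s - γ) := by
        funext s
        by_cases h : s - γ ∈ Ω <;>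
          simp [genSys, Set.indicator_of_mem, Set.indicator_of_notMem, h,
            dotp_comm (φ (s - γ)) lam, dotp_comm (φ (s - γ)) lam']
      rw [key, integral_sub_right_eq_self _ γ, integral_indicator hΩm]
      have hsm : AEStronglyMeasurable
          (fun y : Fin d → ℝ => e2pi (dotp lam y) * (starRingEnd ℂ) (e2pi (dotp lam' y)))
          (Measure.map φ (volume.restrict Ω)) := by
        refine Continuous.aestronglyMeasurable ?_
        exact (e2pi_continuous.comp (dotp_continuous lam)).mul
          (Complex.continuous_conj.comp (e2pi_continuous.comp (dotp_continuous lam')))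
      have h0 := hb.1 lam hlam lam' hlam' hlamne
      simp only [id] at h0
      rw [integral_map hφm hsm] at h0
      exact h0
    · have hnull := hc₁ γ hγ γ' hγ' hγγ
      have hae : (fun s => genSys Ω φ lam γ s * (starRingEnd ℂ) (genSys Ω φ lam' γ' s))
          =ᵐ[volume] 0 := by
        have h0 : ∀ᵐ s ∂(volume : Measure (Fin m → ℝ)),
            s ∉ ((fun x => x + γ) '' Ω) ∩ ((fun x => x + γ') '' Ω) :=
          measure_eq_zero_iff_ae_notMem.mp hnull
        filter_upwards [h0] with s hs
        by_cases h1 : s - γ ∈ Ω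
        · have h2 : s - γ' ∉ Ω := fun h2 => hs ⟨(hmem γ s).mpr h1, (hmem γ' s).mpr h2⟩
          simp [genSys, Set.indicator_of_notMem, h2]
        · simp [genSys, Set.indicator_of_notMem, h1]
      exact integral_eq_zero_of_ae hae
  · -- nondegeneracy
    intro lam hlam γ hγ
    have key : (fun s => ‖genSys Ω φ lam γ s‖ ^ 2)
        = fun s => (Set.indicator Ω (fun _ => (1:ℝ))) (s - γ) := by
      funext s
      by_cases h : s - γ ∈ Ω <;>
        simp [genSys, Set.indicator_of_mem, Set.indicator_of_notMem, h, e2pi_norm, e2pi_abs]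
    rw [key, integral_sub_right_eq_self (Set.indicator Ω fun _ => (1:ℝ)) γ]
    have hint : ∫ x, Set.indicator Ω (fun _ => (1:ℝ)) x = (volume Ω).toReal := by
      exact integral_indicator_one hΩm
    rw [hint]
    exact (ENNReal.toReal_pos hΩpos.ne' hΩfin.ne).ne'
  · -- completeness
    intro g hg horth
    have key : ∀ γ ∈ Γ, ∀ᵐ x ∂(volume : Measure (Fin m → ℝ)), x ∈ Ω → g (x + γ) = 0 := by
      intro γ hγ
      set f : (Fin m → ℝ) → ℂ := fun x => g (x + γ) with hfdef
      have hfΩ : MemLp f 2 (volume.restrict Ω) :=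
        (hg.comp_measurePreserving (measurePreserving_add_right volume γ)).restrict Ω
      obtain ⟨h, hhL2, hfeq⟩ := ha f hfΩ
      have horthf : ∀ lam ∈ Λ,
          ∫ y, h y * (starRingEnd ℂ) (e2pi (dotp lam y)) ∂(Measure.map φ (volume.restrict Ω)) = 0 := by
        intro lam hlam
        have h1 := horth lam hlam γ hγ
        have e1 : (fun s => g s * (starRingEnd ℂ) (genSys Ω φ lam γ s))
            = fun s => (Set.indicator Ω
                (fun x => f x * (starRingEnd ℂ) (e2pi (dotp lam (φ x))))) (s - γ) := by
          funext s
          by_cases hsΩ : s - γ ∈ Ω <;>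
            simp [genSys, hfdef, Set.indicator_of_mem, Set.indicator_of_notMem, hsΩ,
              sub_add_cancel, dotp_comm (φ (s - γ)) lam]
        rw [e1, integral_sub_right_eq_self _ γ, integral_indicator hΩm] at h1
        have hsm : AEStronglyMeasurable
            (fun y : Fin d → ℝ => h y * (starRingEnd ℂ) (e2pi (dotp lam y)))
            (Measure.map φ (volume.restrict Ω)) :=
          hhL2.aestronglyMeasurable.mul
            ((Complex.continuous_conj.comp
              (e2pi_continuous.comp (dotp_continuous lam))).aestronglyMeasurable)
        rw [integral_map hφm hsm, ← h1]
        apply integral_congr_ae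
        filter_upwards [hfeq] with x hx
        rw [hx]
      have hh0 : h =ᵐ[Measure.map φ (volume.restrict Ω)] 0 := by
        refine hb.2.2 h hhL2 ?_
        intro lam hlam
        simpa only [id] using horthf lam hlam
      have hfa0 : f =ᵐ[volume.restrict Ω] 0 := by
        have hh0'' : ∀ᵐ y ∂(Measure.map φ (volume.restrict Ω)), h y = 0 := by
          filter_upwards [hh0] with y hy using hy
        have hh0' : ∀ᵐ x ∂(volume.restrict Ω), h (φ x) = 0 :=
          ae_of_ae_map (p := fun y => h y = 0) hφm hh0''
        filter_upwards [hfeq, hh0'] with x hx h0x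
        simp [hx, h0x]
      have hres := ae_imp_of_ae_restrict hfa0
      filter_upwards [hres] with x hx hxΩ
      simpa [hfdef] using hx hxΩ
    have keyΓ : ∀ᵐ s ∂(volume : Measure (Fin m → ℝ)), ∀ γ ∈ Γ, s - γ ∈ Ω → g s = 0 := by
      rw [ae_ball_iff hΓ]
      intro γ hγ
      have hmp : MeasurePreserving (fun s : Fin m → ℝ => s + -γ) volume volume :=
        measurePreserving_add_right volume (-γ)
      have h2 : ∀ᵐ s ∂(volume : Measure (Fin m → ℝ)), s + -γ ∈ Ω → g (s + -γ + γ) = 0 := by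
        apply ae_of_ae_map hmp.measurable.aemeasurable (p := fun x => x ∈ Ω → g (x + γ) = 0)
        rw [hmp.map_eq]
        exact key γ hγ
      filter_upwards [h2] with s hs hmemΩ
      have h3 := hs (by rwa [← sub_eq_add_neg])
      rwa [neg_add_cancel_right] at h3
    have hcov : ∀ᵐ s ∂(volume : Measure (Fin m → ℝ)), s ∈ ⋃ γ ∈ Γ, (fun x => x + γ) '' Ω := by
      have h0 : ∀ᵐ s ∂(volume : Measure (Fin m → ℝ)),
          s ∉ Set.univ \ ⋃ γ ∈ Γ, (fun x => x + γ) '' Ω := measure_eq_zero_iff_ae_notMem.mp hc₂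
      filter_upwards [h0] with s hs
      by_contra hmem'
      exact hs ⟨trivial, hmem'⟩
    filter_upwards [keyΓ, hcov] with s h1 h2
    simp only [Set.mem_iUnion] at h2
    obtain ⟨γ, hγ, himg⟩ := h2
    exact h1 γ hγ ((hmem γ s).mp himg)
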